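/- Every nonzero vector of the linear span V of {φ₁, φ₂, φ₃, φ₄} in ℂ² ⊗ ℂ² ⊗ ℂ² that is not a scalar multiple of one of φ₁, φ₂, φ₃, φ₄ is genuinely entangled: for each of the three bipartite cuts {1}|{2,3}, {2}|{1,3}, {3}|{1,2}, any vector of V that factorizes across that cut is a scalar multiple of some φ_j. -/

import Mathlib

noncomputable section

abbrev Q : Type := EuclideanSpace ℂ (Fin 2)
abbrev Q2 : Type := EuclideanSpace ℂ (Fin 2 × Fin 2)
abbrev Q3 : Type := EuclideanSpace ℂ (Fin 2 × Fin 2 × Fin 2)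

/-- standard basis vector of ℂ² -/
def ket2 (i : Fin 2) : Q := EuclideanSpace.single i 1

/-- the state |+⟩ -/
def plus : Q := (Real.sqrt 2 : ℂ)⁻¹ • (ket2 0 + ket2 1)

/-- the state |−⟩ -/
def minus : Q := (Real.sqrt 2 : ℂ)⁻¹ • (ket2 0 - ket2 1)

/-- elementary tensor of three qubit vectors, in ℂ² ⊗ ℂ² ⊗ ℂ² ≅ ℂ⁸ -/
def tp3 (u v w : Q) : Q3 := WithLp.toLp 2 (fun p : Fin 2 × Fin 2 × Fin 2 => u p.1 * v p.2.1 * w p.2.2)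

/-- a product vector in ℂ² ⊗ ℂ² ⊗ ℂ² -/
def IsProd3 (ξ : Q3) : Prop := ∃ u v w : Q, ξ = tp3 u v w

/-- the set of one-dimensional subspaces of `T` spanned by (nonzero) product vectors -/
def prodLines3 (T : Submodule ℂ Q3) : Set (Submodule ℂ Q3) :=
  {L | ∃ ξ : Q3, ξ ≠ 0 ∧ ξ ∈ T ∧ IsProd3 ξ ∧ L = Submodule.span ℂ {ξ}}

/-- a factorized vector across the bipartite cut {1} | {2,3} -/
def cut1 (u : Q) (η : Q2) : Q3 := WithLp.toLp 2 (fun p : Fin 2 × Fin 2 × Fin 2 => u p.1 * η p.2)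

/-- a factorized vector across the bipartite cut {2} | {1,3} -/
def cut2 (u : Q) (η : Q2) : Q3 := WithLp.toLp 2 (fun p : Fin 2 × Fin 2 × Fin 2 => u p.2.1 * η (p.1, p.2.2))

/-- a factorized vector across the bipartite cut {3} | {1,2} -/
def cut3 (u : Q) (η : Q2) : Q3 := WithLp.toLp 2 (fun p : Fin 2 × Fin 2 × Fin 2 => u p.2.2 * η (p.1, p.2.1))

def φ₁ : Q3 := tp3 (ket2 0) (ket2 1) plus
def φ₂ : Q3 := tp3 (ket2 1) plus (ket2 0)
def φ₃ : Q3 := tp3 plus (ket2 0) (ket2 1)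
def φ₄ : Q3 := tp3 minus minus minus

/-- the span of the three-qubit UPB of Bennett et al. -/
def V3 : Submodule ℂ Q3 := Submodule.span ℂ {φ₁, φ₂, φ₃, φ₄}

/-- the orthogonal complement of the span of the three-qubit UPB -/
def SV : Submodule ℂ Q3 := V3ᗮ

lemma fin01 : ((0:Fin 2) = 1) = False := by simp
lemma fin10 : ((1:Fin 2) = 0) = False := by simp

/-- abbreviation for 1/√2 as a complex number -/
def sc : ℂ := (Real.sqrt 2 : ℂ)⁻¹

lemma sc_ne : sc ≠ 0 := by
  simp only [sc, ne_eq, inv_eq_zero, Complex.ofReal_eq_zero]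
  positivity

lemma exists_coeffs {ψ : Q3} (h : ψ ∈ V3) :
    ∃ a b c d : ℂ, ψ = a • φ₁ + b • φ₂ + c • φ₃ + d • φ₄ := by
  rw [V3, Submodule.mem_span_insert] at h
  obtain ⟨a, z, hz, rfl⟩ := h
  rw [Submodule.mem_span_insert] at hz
  obtain ⟨b, z, hz, rfl⟩ := hz
  rw [Submodule.mem_span_insert] at hz
  obtain ⟨c, z, hz, rfl⟩ := hz
  rw [Submodule.mem_span_singleton] at hz
  obtain ⟨d, rfl⟩ := hz
  exact ⟨a, b, c, d, by module⟩

section values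

variable (a b c d : ℂ)

local notation "Ψ" => a • φ₁ + b • φ₂ + c • φ₃ + d • φ₄

attribute [local simp] PiLp.add_apply PiLp.smul_apply smul_eq_mul φ₁ φ₂ φ₃ φ₄ tp3
  plus minus ket2 EuclideanSpace.single_apply PiLp.sub_apply fin01 fin10

lemma v000 : Ψ (0,0,0) = d*sc^3 := by
  simp only [PiLp.add_apply, PiLp.smul_apply, smul_eq_mul, φ₁, φ₂, φ₃, φ₄, tp3, PiLp.toLp_apply, plus, minus,
    ket2, EuclideanSpace.single_apply, PiLp.sub_apply, sc, fin01, fin10, if_true, if_false]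
  ring
lemma v001 : Ψ (0,0,1) = c*sc - d*sc^3 := by
  simp only [PiLp.add_apply, PiLp.smul_apply, smul_eq_mul, φ₁, φ₂, φ₃, φ₄, tp3, PiLp.toLp_apply, plus, minus,
    ket2, EuclideanSpace.single_apply, PiLp.sub_apply, sc, fin01, fin10, if_true, if_false]
  ring
lemma v010 : Ψ (0,1,0) = a*sc - d*sc^3 := by
  simp only [PiLp.add_apply, PiLp.smul_apply, smul_eq_mul, φ₁, φ₂, φ₃, φ₄, tp3, PiLp.toLp_apply, plus, minus,
    ket2, EuclideanSpace.single_apply, PiLp.sub_apply, sc, fin01, fin10, if_true, if_false]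
  ring
lemma v011 : Ψ (0,1,1) = a*sc + d*sc^3 := by
  simp only [PiLp.add_apply, PiLp.smul_apply, smul_eq_mul, φ₁, φ₂, φ₃, φ₄, tp3, PiLp.toLp_apply, plus, minus,
    ket2, EuclideanSpace.single_apply, PiLp.sub_apply, sc, fin01, fin10, if_true, if_false]
  ring
lemma v100 : Ψ (1,0,0) = b*sc - d*sc^3 := by
  simp only [PiLp.add_apply, PiLp.smul_apply, smul_eq_mul, φ₁, φ₂, φ₃, φ₄, tp3, PiLp.toLp_apply, plus, minus,
    ket2, EuclideanSpace.single_apply, PiLp.sub_apply, sc, fin01, fin10, if_true, if_false]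
  ring
lemma v101 : Ψ (1,0,1) = c*sc + d*sc^3 := by
  simp only [PiLp.add_apply, PiLp.smul_apply, smul_eq_mul, φ₁, φ₂, φ₃, φ₄, tp3, PiLp.toLp_apply, plus, minus,
    ket2, EuclideanSpace.single_apply, PiLp.sub_apply, sc, fin01, fin10, if_true, if_false]
  ring
lemma v110 : Ψ (1,1,0) = b*sc + d*sc^3 := by
  simp only [PiLp.add_apply, PiLp.smul_apply, smul_eq_mul, φ₁, φ₂, φ₃, φ₄, tp3, PiLp.toLp_apply, plus, minus,
    ket2, EuclideanSpace.single_apply, PiLp.sub_apply, sc, fin01, fin10, if_true, if_false]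
  ring
lemma v111 : Ψ (1,1,1) = -(d*sc^3) := by
  simp only [PiLp.add_apply, PiLp.smul_apply, smul_eq_mul, φ₁, φ₂, φ₃, φ₄, tp3, PiLp.toLp_apply, plus, minus,
    ket2, EuclideanSpace.single_apply, PiLp.sub_apply, sc, fin01, fin10, if_true, if_false]
  ring

end values

/-- Key algebra lemma: rank-one condition on the 2×4 matrix of a UPB combination
forces all pairwise products of coefficients to vanish. -/
lemma alg {A B C t : ℂ}
    (e01 : t*(C+t) = (C-t)*(B-t))
    (e02 : t*(B+t) = (A-t)*(B-t))
    (e03 : t*(-t) = (A+t)*(B-t))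
    (e12 : (C-t)*(B+t) = (A-t)*(C+t))
    (e13 : (C-t)*(-t) = (A+t)*(C+t))
    (e23 : (A-t)*(-t) = (A+t)*(B+t)) :
    A*B = 0 ∧ A*C = 0 ∧ B*C = 0 ∧ A*t = 0 ∧ B*t = 0 ∧ C*t = 0 := by
  have hBt : B*t = 0 := by linear_combination (-(1:ℂ)/3)*e03 + ((1:ℂ)/3)*e02
  have hAt : A*t = 0 := by linear_combination ((1:ℂ)/3)*e03 + (-(1:ℂ)/3)*e23
  have hCt : C*t = 0 := by
    linear_combination ((1:ℂ)/6)*e01 - ((1:ℂ)/6)*e13 + ((1:ℂ)/6)*e12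
  have hAB : A*B = 0 := by linear_combination -e03 + hAt - hBt
  have hCB : C*B = 0 := by linear_combination -e01 + 2*hCt + hBt
  have hAC : A*C = 0 := by linear_combination -e13 - 2*hCt - hAt
  exact ⟨hAB, hAC, by linear_combination hCB, hAt, hBt, hCt⟩

lemma cancel_sc {x : ℂ} (n : ℕ) (h : x * sc ^ n = 0) : x = 0 := by
  rcases mul_eq_zero.mp h with h | h
  · exact h
  · exact absurd h (pow_ne_zero _ sc_ne)


theorem statement5 :
    ∀ ψ ∈ V3,
      ((∃ (u : Q) (η : Q2), ψ = cut1 u η) ∨ (∃ (u : Q) (η : Q2), ψ = cut2 u η) ∨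
        (∃ (u : Q) (η : Q2), ψ = cut3 u η)) →
      ∃ c : ℂ, ψ = c • φ₁ ∨ ψ = c • φ₂ ∨ ψ = c • φ₃ ∨ ψ = c • φ₄ := by
  intro ψ hmem hfac
  obtain ⟨a, b, c, d, rfl⟩ := exists_coeffs hmem
  have H : a*b = 0 ∧ a*c = 0 ∧ b*c = 0 ∧ a*d = 0 ∧ b*d = 0 ∧ c*d = 0 := by
    rcases hfac with ⟨u, η, h⟩ | ⟨u, η, h⟩ | ⟨u, η, h⟩
    · -- cut {1}|{2,3}
      have m : ∀ y z y' z' : Fin 2,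
          (a•φ₁+b•φ₂+c•φ₃+d•φ₄) (0,y,z) * (a•φ₁+b•φ₂+c•φ₃+d•φ₄) (1,y',z') =
          (a•φ₁+b•φ₂+c•φ₃+d•φ₄) (0,y',z') * (a•φ₁+b•φ₂+c•φ₃+d•φ₄) (1,y,z) := by
        intro y z y' z'; rw [h]; simp only [cut1, PiLp.toLp_apply]; ring
      obtain ⟨p1, p2, p3, p4, p5, p6⟩ := alg
        (by have := m 0 0 0 1; rwa [v000, v101, v001, v100] at this)
        (by have := m 0 0 1 0; rwa [v000, v110, v010, v100] at this)
        (by have := m 0 0 1 1; rwa [v000, v111, v011, v100] at this)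
        (by have := m 0 1 1 0; rwa [v001, v110, v010, v101] at this)
        (by have := m 0 1 1 1; rwa [v001, v111, v011, v101] at this)
        (by have := m 1 0 1 1; rwa [v010, v111, v011, v110] at this)
      exact ⟨cancel_sc 2 (by linear_combination p1), cancel_sc 2 (by linear_combination p2),
        cancel_sc 2 (by linear_combination p3), cancel_sc 4 (by linear_combination p4),
        cancel_sc 4 (by linear_combination p5), cancel_sc 4 (by linear_combination p6)⟩
    · -- cut {2}|{1,3}
      have m : ∀ x z x' z' : Fin 2,
          (a•φ₁+b•φ₂+c•φ₃+d•φ₄) (x,0,z) * (a•φ₁+b•φ₂+c•φ₃+d•φ₄) (x',1,z') =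
          (a•φ₁+b•φ₂+c•φ₃+d•φ₄) (x',0,z') * (a•φ₁+b•φ₂+c•φ₃+d•φ₄) (x,1,z) := by
        intro x z x' z'; rw [h]; simp only [cut2, PiLp.toLp_apply]; ring
      obtain ⟨p1, p2, p3, p4, p5, p6⟩ := alg
        (by have := m 0 0 1 0; rwa [v000, v110, v100, v010] at this)
        (by have := m 0 0 0 1; rwa [v000, v011, v001, v010] at this)
        (by have := m 0 0 1 1; rwa [v000, v111, v101, v010] at this)
        (by have := m 1 0 0 1; rwa [v100, v011, v001, v110] at this)
        (by have := m 1 0 1 1; rwa [v100, v111, v101, v110] at this)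
        (by have := m 0 1 1 1; rwa [v001, v111, v101, v011] at this)
      exact ⟨cancel_sc 2 (by linear_combination p3), cancel_sc 2 (by linear_combination p1),
        cancel_sc 2 (by linear_combination p2), cancel_sc 4 (by linear_combination p5),
        cancel_sc 4 (by linear_combination p6), cancel_sc 4 (by linear_combination p4)⟩
    · -- cut {3}|{1,2}
      have m : ∀ x y x' y' : Fin 2,
          (a•φ₁+b•φ₂+c•φ₃+d•φ₄) (x,y,0) * (a•φ₁+b•φ₂+c•φ₃+d•φ₄) (x',y',1) =
          (a•φ₁+b•φ₂+c•φ₃+d•φ₄) (x',y',0) * (a•φ₁+b•φ₂+c•φ₃+d•φ₄) (x,y,1) := by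
        intro x y x' y'; rw [h]; simp only [cut3, PiLp.toLp_apply]; ring
      obtain ⟨p1, p2, p3, p4, p5, p6⟩ := alg
        (by have := m 0 0 0 1; rwa [v000, v011, v010, v001] at this)
        (by have := m 0 0 1 0; rwa [v000, v101, v100, v001] at this)
        (by have := m 0 0 1 1; rwa [v000, v111, v110, v001] at this)
        (by have := m 0 1 1 0; rwa [v010, v101, v100, v011] at this)
        (by have := m 0 1 1 1; rwa [v010, v111, v110, v011] at this)
        (by have := m 1 0 1 1; rwa [v100, v111, v110, v101] at this)
      exact ⟨cancel_sc 2 (by linear_combination p2), cancel_sc 2 (by linear_combination p3),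
        cancel_sc 2 (by linear_combination p1), cancel_sc 4 (by linear_combination p6),
        cancel_sc 4 (by linear_combination p4), cancel_sc 4 (by linear_combination p5)⟩
  obtain ⟨hab, hac, hbc, had, hbd, hcd⟩ := H
  by_cases ha : a = 0
  · by_cases hb : b = 0
    · by_cases hc : c = 0
      · exact ⟨d, Or.inr (Or.inr (Or.inr (by rw [ha, hb, hc]; module)))⟩
      · have hd : d = 0 := (mul_eq_zero.mp hcd).resolve_left hc
        exact ⟨c, Or.inr (Or.inr (Or.inl (by rw [ha, hb, hd]; module)))⟩
    · have hc : c = 0 := (mul_eq_zero.mp hbc).resolve_left hb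
      have hd : d = 0 := (mul_eq_zero.mp hbd).resolve_left hb
      exact ⟨b, Or.inr (Or.inl (by rw [ha, hc, hd]; module))⟩
  · have hb : b = 0 := (mul_eq_zero.mp hab).resolve_left ha
    have hc : c = 0 := (mul_eq_zero.mp hac).resolve_left ha
    have hd : d = 0 := (mul_eq_zero.mp had).resolve_left ha
    exact ⟨a, Or.inl (by rw [hb, hc, hd]; module)⟩
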